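/- For all n ≥ 3, the number of paths between pairs of distinct leaves, summed over all plane trees on n vertices, equals (2n-5)!/((n-3)!)^2. -/

import Mathlib

inductive PlaneTree : Type where
  | node : List PlaneTree → PlaneTree

namespace PlaneTree

mutual
def size : PlaneTree → ℕ
  | .node ts => 1 + sizeList ts
def sizeList : List PlaneTree → ℕ
  | [] => 0
  | t :: ts => size t + sizeList ts
end

mutual
def positions : PlaneTree → List (List ℕ)
  | .node ts => [] :: positionsList 0 ts
def positionsList : ℕ → List PlaneTree → List (List ℕ)
  | _, [] => []
  | i, t :: ts => (positions t).map (i :: ·) ++ positionsList (i+1) ts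
end

mutual
def leafPositions : PlaneTree → List (List ℕ)
  | .node [] => [[]]
  | .node (t :: ts) => leafList 0 (t :: ts)
def leafList : ℕ → List PlaneTree → List (List ℕ)
  | _, [] => []
  | i, t :: ts => (leafPositions t).map (i :: ·) ++ leafList (i+1) ts
end

def isPrefixB : List ℕ → List ℕ → Bool
  | [], _ => true
  | _ :: _, [] => false
  | a :: as, b :: bs => a == b && isPrefixB as bs

def lcpLen : List ℕ → List ℕ → ℕ
  | a :: as, b :: bs => if a = b then 1 + lcpLen as bs else 0
  | _, _ => 0

/-- number of edges on the path between two vertices given by positions -/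
def pathDist (p q : List ℕ) : ℕ :=
  (p.length - lcpLen p q) + (q.length - lcpLen p q)

/-- number of vertical paths (vertex, proper descendant) in a tree -/
def verticalPairs (T : PlaneTree) : ℕ :=
  ((positions T).map (fun q =>
    ((positions T).filter (fun p => p != q && isPrefixB p q)).length)).sum

/-- total number of edges over all vertical paths in a tree -/
def verticalEdges (T : PlaneTree) : ℕ :=
  ((positions T).map (fun q =>
    (((positions T).filter (fun p => p != q && isPrefixB p q)).map
      (fun p => q.length - p.length)).sum)).sum

/-- number of (unordered) paths between distinct vertices -/
def pathCount (T : PlaneTree) : ℕ := ((positions T).sublistsLen 2).length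

/-- Wiener index: sum of distances over unordered pairs of distinct vertices -/
def wiener (T : PlaneTree) : ℕ :=
  (((positions T).sublistsLen 2).map (fun l =>
    match l with
    | [p, q] => pathDist p q
    | _ => 0)).sum

end PlaneTree

namespace PlaneTree

/-! ### number of leaves -/

def numLeaves (t : PlaneTree) : ℕ := t.leafPositions.length

def numLeavesF (ts : List PlaneTree) : ℕ := (ts.map numLeaves).sum

lemma leafList_length (ts : List PlaneTree) : ∀ i, (leafList i ts).length = numLeavesF ts := by
  induction ts with
  | nil => intro i; simp [leafList, numLeavesF]
  | cons t ts ih =>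
    intro i
    simp [leafList, numLeavesF, ih (i+1), numLeaves]

lemma numLeaves_node_nil : numLeaves (node []) = 1 := rfl

lemma numLeaves_node (t : PlaneTree) (ts : List PlaneTree) :
    numLeaves (node (t :: ts)) = numLeavesF (t :: ts) := by
  simp [numLeaves, leafPositions, leafList_length]

lemma numLeavesF_cons (t : PlaneTree) (ts : List PlaneTree) :
    numLeavesF (t :: ts) = numLeaves t + numLeavesF ts := by
  simp [numLeavesF]

/-! ### enumeration of forests -/

def forests : ℕ → List (List PlaneTree)
  | 0 => [[]]
  | m+1 => (List.range (m+1)).attach.flatMap fun k =>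
      (forests k.1).flatMap fun us => (forests (m - k.1)).map fun ts => PlaneTree.node us :: ts
decreasing_by
  · have := k.2; simp [List.mem_range] at this; omega
  · have := k.2; simp [List.mem_range] at this; omega

lemma size_node (ts : List PlaneTree) : size (node ts) = 1 + sizeList ts := rfl

lemma forests_sound : ∀ m, ∀ ts ∈ forests m, sizeList ts = m := by
  intro m
  induction m using Nat.strong_induction_on with
  | _ m ih =>
    match m with
    | 0 => intro ts h; simp [forests] at h; simp [h, sizeList]
    | m+1 =>
      intro ts h
      rw [forests] at h
      simp only [List.mem_flatMap, List.mem_attach, List.mem_map, true_and] at h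
      obtain ⟨⟨k, hk⟩, ⟨us, hus, vs, hvs, rfl⟩⟩ := h
      simp only [List.mem_range] at hk
      have h1 := ih k (by omega) us hus
      have h2 := ih (m - k) (by omega) vs hvs
      simp [sizeList, size_node, h1, h2]
      omega

lemma forests_complete : ∀ ts : List PlaneTree, ts ∈ forests (sizeList ts) := by
  intro ts
  generalize hm : sizeList ts = m
  induction m using Nat.strong_induction_on generalizing ts with
  | _ m ih =>
    match ts, m with
    | [], m =>
      simp only [sizeList] at hm
      subst hm; simp [forests]
    | (node us) :: vs, m =>
      have hsz : sizeList (node us :: vs) = 1 + sizeList us + sizeList vs := by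
        simp [sizeList, size_node]
      rw [hm] at hsz
      match m, hsz with
      | 0, hsz => exact absurd hsz (by omega)
      | m + 1, hsz =>
        rw [forests]
        simp only [List.mem_flatMap, List.mem_attach, List.mem_map, true_and]
        refine ⟨⟨sizeList us, ?_⟩, us, ?_, vs, ?_, rfl⟩
        · simp [List.mem_range]; omega
        · exact ih (sizeList us) (by omega) us rfl
        · have : m - sizeList us = sizeList vs := by omega
          rw [this]
          exact ih (sizeList vs) (by omega) vs rfl

lemma node_injective : Function.Injective PlaneTree.node := by
  intro a b h; cases h; rfl

lemma forests_nodup : ∀ m, (forests m).Nodup := by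
  intro m
  induction m using Nat.strong_induction_on with
  | _ m ih =>
    match m with
    | 0 => simp [forests]
    | m+1 =>
      rw [forests]
      rw [List.nodup_flatMap]
      constructor
      · rintro ⟨k, hk⟩ -
        simp only [List.mem_range] at hk
        rw [List.nodup_flatMap]
        constructor
        · intro us _
          exact ((ih (m-k) (by omega)).map (fun a b h => by cases h; rfl))
        · apply List.Nodup.pairwise_of_forall_ne (ih k (by omega))
          intro us _ us' _ hne
          simp only [Function.onFun, List.Disjoint]
          rintro x hx hx'
          simp only [List.mem_map] at hx hx'
          obtain ⟨vs, -, rfl⟩ := hx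
          obtain ⟨vs', -, heq⟩ := hx'
          apply hne
          have := heq.symm
          injection this with h1 h2
          exact node_injective h1
      · apply List.Nodup.pairwise_of_forall_ne (List.nodup_attach.mpr List.nodup_range)
        rintro ⟨k, hk⟩ - ⟨k', hk'⟩ - hne
        simp only [List.mem_range] at hk hk'
        simp only [Function.onFun, List.Disjoint]
        rintro x hx hx'
        simp only [List.mem_flatMap, List.mem_map] at hx hx'
        obtain ⟨us, hus, vs, -, rfl⟩ := hx
        obtain ⟨us', hus', vs', -, heq⟩ := hx'
        have e1 := forests_sound k us hus
        have e2 := forests_sound k' us' hus'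
        apply hne
        have := heq.symm
        injection this with h1 h2
        have := node_injective h1
        subst this
        exact Subtype.ext (show k = k' by omega)

end PlaneTree
namespace PlaneTree

open Finset

/-! ### Catalan / central binomial identities over ℚ -/

noncomputable def cQ (n : ℕ) : ℚ := (catalan n : ℚ)
noncomputable def dQ (n : ℕ) : ℚ := (Nat.centralBinom n : ℚ)

lemma cQ_zero : cQ 0 = 1 := by simp [cQ]
lemma dQ_zero : dQ 0 = 1 := by simp [dQ, Nat.centralBinom]
lemma dQ_one : dQ 1 = 2 := by simp [dQ]; rfl

lemma P1 (n : ℕ) : (n + 1 : ℚ) * cQ n = dQ n := by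
  have := succ_mul_catalan_eq_centralBinom n
  have h : ((n+1) * catalan n : ℚ) = (Nat.centralBinom n : ℚ) := by exact_mod_cast congrArg (Nat.cast : ℕ → ℚ) this
  push_cast at h
  simpa [cQ, dQ] using h

lemma P2 (n : ℕ) : (n + 1 : ℚ) * dQ (n+1) = (4 * n + 2) * dQ n := by
  have := Nat.succ_mul_centralBinom_succ n
  have h : (((n+1) * (n+1).centralBinom : ℕ) : ℚ) = ((2 * (2*n+1) * n.centralBinom : ℕ) : ℚ) := by
    exact_mod_cast congrArg (Nat.cast : ℕ → ℚ) this
  push_cast at h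
  rw [dQ, dQ]
  push_cast
  linarith [h]

lemma P0 (n : ℕ) : dQ (n+1) = 4 * dQ n - 2 * cQ n := by
  have h1 := P1 n
  have h2 := P2 n
  have hn : (n + 1 : ℚ) ≠ 0 := by positivity
  field_simp at h1 h2 ⊢
  nlinarith [h1, h2]

/-- convolution of two sequences -/
noncomputable def conv (f g : ℕ → ℚ) (n : ℕ) : ℚ := ∑ j ∈ range (n+1), f j * g (n - j)

lemma L1 (n : ℕ) : conv cQ cQ n = cQ (n+1) := by
  rw [conv]
  have := catalan_succ' n
  rw [Finset.Nat.sum_antidiagonal_eq_sum_range_succ (f := fun i j => catalan i * catalan j)] at this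
  rw [cQ]
  rw [this]
  push_cast
  rfl

/-- key triple-sum interchange -/
lemma key (Y g : ℕ → ℚ) (n : ℕ) :
    ∑ j ∈ range (n+1), (∑ i ∈ range j, cQ i * Y (j-1-i)) * g (n-j)
      = ∑ i ∈ range n, cQ i * ∑ k ∈ range (n-i), Y k * g (n-1-i-k) := by
  simp_rw [Finset.sum_mul, Finset.mul_sum]
  rw [Finset.sum_sigma' (range (n+1)) (fun j => range j)
    (fun j i => cQ i * Y (j-1-i) * g (n-j))]
  rw [Finset.sum_sigma' (range n) (fun i => range (n-i))
    (fun i k => cQ i * (Y k * g (n-1-i-k)))]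
  apply Finset.sum_nbij' (fun p => ⟨p.2, p.1 - 1 - p.2⟩) (fun q => ⟨q.1 + q.2 + 1, q.1⟩)
  · rintro ⟨j, i⟩ h
    simp only [Finset.mem_sigma, Finset.mem_range] at h ⊢
    omega
  · rintro ⟨i, k⟩ h
    simp only [Finset.mem_sigma, Finset.mem_range] at h ⊢
    omega
  · rintro ⟨j, i⟩ h
    simp only [Finset.mem_sigma, Finset.mem_range] at h
    simp only [Sigma.mk.inj_iff]
    constructor
    · first | trivial | omega
    · exact heq_of_eq (by omega)
  · rintro ⟨i, k⟩ h
    simp only [Finset.mem_sigma, Finset.mem_range] at h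
    simp only [Sigma.mk.inj_iff]
    constructor
    · first | trivial | omega
    · exact heq_of_eq (by omega)
  · rintro ⟨j, i⟩ h
    simp only [Finset.mem_sigma, Finset.mem_range] at h
    have h1 : j - 1 - i = j - 1 - i := rfl
    have e1 : n - 1 - i - (j - 1 - i) = n - j := by omega
    rw [e1]
    ring

end PlaneTree
namespace PlaneTree
open Finset

lemma conv_comm (f g : ℕ → ℚ) (n : ℕ) : conv f g n = conv g f n := by
  rw [conv, conv, ← Finset.sum_range_reflect]
  apply Finset.sum_congr rfl
  intro j hj
  simp only [Finset.mem_range] at hj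
  have h1 : n + 1 - 1 - j = n - j := by omega
  have h2 : n - (n - j) = j := by omega
  rw [h1, h2, mul_comm]

lemma cQ_shift (j : ℕ) (hj : 1 ≤ j) : cQ j = ∑ i ∈ range j, cQ i * cQ (j-1-i) := by
  match j, hj with
  | j+1, _ =>
    rw [← L1, conv]
    apply Finset.sum_congr rfl
    intro i hi
    simp only [Finset.mem_range] at hi
    have : j + 1 - 1 - i = j - i := by omega
    rw [this]

/-- `conv cQ dQ n = dQ (n+1) / 2` -/
lemma L2 (n : ℕ) : conv cQ dQ n = dQ (n+1) / 2 := by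
  induction n using Nat.strong_induction_on with
  | _ n ih =>
    have step : conv cQ dQ n
        = dQ n + ∑ j ∈ range (n+1), (∑ i ∈ range j, cQ i * cQ (j-1-i)) * dQ (n-j) := by
      rw [conv]
      have termwise : ∀ j ∈ range (n+1), cQ j * dQ (n-j)
          = (∑ i ∈ range j, cQ i * cQ (j-1-i)) * dQ (n-j) + (if j = 0 then dQ n else 0) := by
        intro j hj
        match j with
        | 0 => simp [cQ_zero]
        | j+1 => rw [← cQ_shift (j+1) (by omega)]; simp
      rw [Finset.sum_congr rfl termwise, Finset.sum_add_distrib,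
        Finset.sum_ite_eq' (range (n+1)) 0 (fun _ => dQ n)]
      simp [add_comm]
    rw [key cQ dQ n] at step
    have inner : ∀ i ∈ range n, cQ i * ∑ k ∈ range (n-i), cQ k * dQ (n-1-i-k)
        = cQ i * (dQ (n-i) / 2) := by
      intro i hi
      simp only [Finset.mem_range] at hi
      have h1 : ∑ k ∈ range (n-i), cQ k * dQ (n-1-i-k) = conv cQ dQ (n-1-i) := by
        rw [conv]
        have : n - i = (n-1-i) + 1 := by omega
        rw [this]
      rw [h1, ih (n-1-i) (by omega)]
      have : n - 1 - i + 1 = n - i := by omega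
      rw [this]
    rw [Finset.sum_congr rfl inner] at step
    have expand : ∑ i ∈ range n, cQ i * (dQ (n-i) / 2)
        = (conv cQ dQ n - cQ n) / 2 := by
      have t : ∀ i ∈ range n, cQ i * (dQ (n-i) / 2) = (cQ i * dQ (n-i))/2 := by
        intro i _; ring
      rw [Finset.sum_congr rfl t, ← Finset.sum_div, conv, Finset.sum_range_succ]
      have : n - n = 0 := by omega
      rw [this, dQ_zero]
      ring
    rw [expand] at step
    have hP0 := P0 n
    linarith [step, hP0]

/-- `∑ cQ j * 4^(n-j) = (4^(n+1) - dQ (n+1))/2` -/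
lemma L3a (n : ℕ) : ∑ j ∈ range (n+1), cQ j * 4^(n-j) = (4^(n+1) - dQ (n+1)) / 2 := by
  induction n with
  | zero => simp [cQ_zero]; rw [dQ_one]; norm_num
  | succ n ih =>
    rw [Finset.sum_range_succ]
    have shift : ∀ j ∈ range (n+1), cQ j * (4:ℚ)^(n+1-j) = 4 * (cQ j * 4^(n-j)) := by
      intro j hj
      simp only [Finset.mem_range] at hj
      have : n + 1 - j = (n - j) + 1 := by omega
      rw [this]; ring
    rw [Finset.sum_congr rfl shift, ← Finset.mul_sum, ih]
    have hP0 := P0 (n+1)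
    have : n + 1 - (n+1) = 0 := by omega
    rw [this]
    simp only [pow_zero, mul_one]
    have hc : cQ (n+1) = (4 * dQ (n+1) - dQ (n+2)) / 2 := by linarith [hP0]
    rw [hc]
    ring

/-- `conv dQ dQ n = 4^n` -/
lemma L3 (n : ℕ) : conv dQ dQ n = 4^n := by
  induction n using Nat.strong_induction_on with
  | _ n ih =>
    match n with
    | 0 => simp [conv, dQ_zero]
    | n+1 =>
      have dQ_shift : ∀ j, 1 ≤ j → dQ j = ∑ i ∈ range j, cQ i * (2 * dQ (j-1-i)) := by
        intro j hj
        match j, hj with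
        | j+1, _ =>
          have := L2 j
          rw [conv] at this
          have h2 : ∑ i ∈ range (j+1), cQ i * (2 * dQ (j+1-1-i))
              = 2 * ∑ i ∈ range (j+1), cQ i * dQ (j-i) := by
            rw [Finset.mul_sum]
            apply Finset.sum_congr rfl
            intro i hi
            have : j + 1 - 1 - i = j - i := by omega
            rw [this]; ring
          rw [h2, this]; ring
      have step : conv dQ dQ (n+1)
          = dQ (n+1) + ∑ j ∈ range (n+2), (∑ i ∈ range j, cQ i * (2 * dQ (j-1-i))) * dQ (n+1-j) := by
        rw [conv]
        have termwise : ∀ j ∈ range (n+2), dQ j * dQ (n+1-j)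
            = (∑ i ∈ range j, cQ i * (2 * dQ (j-1-i))) * dQ (n+1-j) + (if j = 0 then dQ (n+1) else 0) := by
          intro j hj
          match j with
          | 0 => simp [dQ_zero]
          | j+1 => rw [← dQ_shift (j+1) (by omega)]; simp
        rw [Finset.sum_congr rfl termwise, Finset.sum_add_distrib,
          Finset.sum_ite_eq' (range (n+2)) 0 (fun _ => dQ (n+1))]
        simp [add_comm]
      rw [key (fun k => 2 * dQ k) dQ (n+1)] at step
      have inner : ∀ i ∈ range (n+1), cQ i * ∑ k ∈ range (n+1-i), 2 * dQ k * dQ (n+1-1-i-k)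
          = 2 * (cQ i * 4^(n-i)) := by
        intro i hi
        simp only [Finset.mem_range] at hi
        have h1 : ∑ k ∈ range (n+1-i), 2 * dQ k * dQ (n+1-1-i-k) = 2 * conv dQ dQ (n-i) := by
          rw [conv, Finset.mul_sum]
          have h2 : n + 1 - i = (n-i) + 1 := by omega
          rw [h2]
          apply Finset.sum_congr rfl
          intro k hk
          have : n + 1 - 1 - i - k = n - i - k := by omega
          rw [this]; ring
        rw [h1, ih (n-i) (by omega)]
        ring
      rw [Finset.sum_congr rfl inner, ← Finset.mul_sum, L3a n] at step
      rw [step]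
      ring
end PlaneTree
namespace PlaneTree
open Finset

noncomputable def tQ (j : ℕ) : ℚ := (2 * j + 1) * dQ j

/-- `∑ dQ j * 4^(n-j) = (2n+1) * dQ n` -/
lemma L5a (n : ℕ) : ∑ j ∈ range (n+1), dQ j * 4^(n-j) = tQ n := by
  induction n with
  | zero => simp [tQ, dQ_zero]
  | succ n ih =>
    rw [Finset.sum_range_succ]
    have shift : ∀ j ∈ range (n+1), dQ j * (4:ℚ)^(n+1-j) = 4 * (dQ j * 4^(n-j)) := by
      intro j hj
      simp only [Finset.mem_range] at hj
      have : n + 1 - j = (n - j) + 1 := by omega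
      rw [this]; ring
    rw [Finset.sum_congr rfl shift, ← Finset.mul_sum, ih]
    have : n + 1 - (n+1) = 0 := by omega
    rw [this]
    simp only [pow_zero, mul_one, tQ]
    have hP2 := P2 n
    push_cast
    nlinarith [hP2]

/-- `conv cQ tQ n = (tQ (n+1) - 4^(n+1))/2` -/
lemma Lw (n : ℕ) : conv cQ tQ n = (tQ (n+1) - 4^(n+1)) / 2 := by
  induction n using Nat.strong_induction_on with
  | _ n ih =>
    have step : conv cQ tQ n
        = tQ n + ∑ j ∈ range (n+1), (∑ i ∈ range j, cQ i * cQ (j-1-i)) * tQ (n-j) := by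
      rw [conv]
      have termwise : ∀ j ∈ range (n+1), cQ j * tQ (n-j)
          = (∑ i ∈ range j, cQ i * cQ (j-1-i)) * tQ (n-j) + (if j = 0 then tQ n else 0) := by
        intro j hj
        match j with
        | 0 => simp [cQ_zero]
        | j+1 => rw [← cQ_shift (j+1) (by omega)]; simp
      rw [Finset.sum_congr rfl termwise, Finset.sum_add_distrib,
        Finset.sum_ite_eq' (range (n+1)) 0 (fun _ => tQ n)]
      simp [add_comm]
    rw [key cQ tQ n] at step
    have inner : ∀ i ∈ range n, cQ i * ∑ k ∈ range (n-i), cQ k * tQ (n-1-i-k)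
        = cQ i * ((tQ (n-i) - 4^(n-i)) / 2) := by
      intro i hi
      simp only [Finset.mem_range] at hi
      have h1 : ∑ k ∈ range (n-i), cQ k * tQ (n-1-i-k) = conv cQ tQ (n-1-i) := by
        rw [conv]
        have : n - i = (n-1-i) + 1 := by omega
        rw [this]
      rw [h1, ih (n-1-i) (by omega)]
      have : n - 1 - i + 1 = n - i := by omega
      rw [this]
    rw [Finset.sum_congr rfl inner] at step
    have expand : ∑ i ∈ range n, cQ i * ((tQ (n-i) - 4^(n-i)) / 2)
        = (conv cQ tQ n - cQ n) / 2 - ((4^(n+1) - dQ (n+1))/2 - cQ n) / 2 := by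
      have t : ∀ i ∈ range n, cQ i * ((tQ (n-i) - 4^(n-i)) / 2)
          = (cQ i * tQ (n-i))/2 - (cQ i * 4^(n-i))/2 := by
        intro i _; ring
      rw [Finset.sum_congr rfl t, Finset.sum_sub_distrib, ← Finset.sum_div, ← Finset.sum_div]
      have e1 : ∑ i ∈ range n, cQ i * tQ (n-i) = conv cQ tQ n - cQ n := by
        rw [conv, Finset.sum_range_succ]
        have : n - n = 0 := by omega
        rw [this]
        simp [tQ, dQ_zero]
      have e2 : ∑ i ∈ range n, cQ i * (4:ℚ)^(n-i) = (4^(n+1) - dQ (n+1))/2 - cQ n := by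
        have := L3a n
        rw [Finset.sum_range_succ] at this
        have h0 : n - n = 0 := by omega
        rw [h0] at this
        simp only [pow_zero, mul_one] at this
        linarith [this]
      rw [e1, e2]
    rw [expand] at step
    have hP2 := P2 n
    have hP0 := P0 n
    have ht1 : tQ n = (2*n+1) * dQ n := rfl
    have ht2 : tQ (n+1) = (2*n+3) * dQ (n+1) := by rw [tQ]; push_cast; ring
    rw [ht1] at step
    rw [ht2]
    -- step : X = (2n+1) dQ n + (X - cQ n)/2 - ((4^{n+1} - dQ(n+1))/2 - cQ n)/2
    -- goal : X = ((2n+3) dQ (n+1) - 4^{n+1})/2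
    -- use (n+1) dQ (n+1) = (4n+2) dQ n  and dQ (n+1) = 4 dQ n - 2 cQ n
    nlinarith [step, hP2, hP0]

/-- `∑ (j+1) * dQ j * cQ (n-j) = (n+2)*dQ(n+1)/2 - 4^n` -/
lemma Lv (n : ℕ) : ∑ j ∈ range (n+1), (j+1 : ℚ) * dQ j * cQ (n-j) = (n+2) * dQ (n+1) / 2 - 4^n := by
  match n with
  | 0 =>
    simp [dQ_zero, cQ_zero]
    rw [dQ_one]; norm_num
  | n+1 =>
    have termwise : ∀ j ∈ range (n+2), (j+1 : ℚ) * dQ j * cQ (n+1-j)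
        = dQ j * cQ (n+1-j) + (if j = 0 then 0 else 2 * tQ (j-1) * cQ (n+1-j)) := by
      intro j hj
      match j with
      | 0 => simp [dQ_zero]
      | j+1 =>
        rw [if_neg (Nat.succ_ne_zero j)]
        simp only [Nat.add_sub_cancel]
        have hidx : n + 1 - (j+1) = n - j := by omega
        rw [hidx]
        push_cast
        have h : ((j:ℚ)+1+1) * dQ (j+1) = dQ (j+1) + 2 * tQ j := by
          rw [tQ]; push_cast; linarith [P2 j]
        linear_combination cQ (n-j) * h
    rw [Finset.sum_congr rfl termwise, Finset.sum_add_distrib]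
    have p1 : ∑ j ∈ range (n+2), dQ j * cQ (n+1-j) = dQ (n+2) / 2 := by
      have := conv_comm dQ cQ (n+1)
      rw [conv] at this
      rw [this, L2]
    have p2 : ∑ j ∈ range (n+2), (if j = 0 then 0 else 2 * tQ (j-1) * cQ (n+1-j))
        = 2 * conv tQ cQ n := by
      rw [Finset.sum_range_succ']
      have h0 : (if (0:ℕ) = 0 then (0:ℚ) else 2 * tQ (0-1) * cQ (n+1-0)) = 0 := by simp
      rw [h0, add_zero, conv, Finset.mul_sum]
      apply Finset.sum_congr rfl
      intro k hk
      rw [if_neg (Nat.succ_ne_zero k)]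
      simp only [Nat.add_sub_cancel]
      have : n + 1 - (k+1) = n - k := by omega
      rw [this]; ring
    rw [p1, p2, conv_comm, Lw n]
    have hP2 := P2 (n+1)
    have ht2 : tQ (n+1) = (2*n+3) * dQ (n+1) := by rw [tQ]; push_cast; ring
    rw [ht2]
    push_cast
    push_cast at hP2
    nlinarith [hP2]

/-- `∑ j * dQ j * cQ (n-j) = (n+1)*dQ(n+1)/2 - 4^n` -/
lemma Lu (n : ℕ) : ∑ j ∈ range (n+1), (j : ℚ) * dQ j * cQ (n-j) = (n+1) * dQ (n+1) / 2 - 4^n := by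
  have h1 := Lv n
  have h2 : ∑ j ∈ range (n+1), dQ j * cQ (n-j) = dQ (n+1) / 2 := by
    have := conv_comm dQ cQ n
    rw [conv] at this
    rw [this, L2]
  have h3 : ∑ j ∈ range (n+1), (j : ℚ) * dQ j * cQ (n-j)
      = ∑ j ∈ range (n+1), ((j+1 : ℚ) * dQ j * cQ (n-j) - dQ j * cQ (n-j)) := by
    apply Finset.sum_congr rfl
    intro j _; ring
  rw [h3, Finset.sum_sub_distrib, h1, h2]
  ring

end PlaneTree
namespace PlaneTree
open Finset

lemma sum_flatMap' {α : Type*} (A : List α) (G : α → List ℚ) :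
    (A.flatMap G).sum = (A.map (fun a => (G a).sum)).sum := by
  rw [List.flatMap_def, List.sum_flatten, List.map_map]
  rfl

lemma sum_attach_map {α : Type*} (l : List α) (f : α → ℚ) :
    (l.attach.map (fun x => f x.1)).sum = (l.map f).sum := by
  have : l.attach.map (fun x => f x.1) = (l.attach.map Subtype.val).map f := by
    rw [List.map_map]; rfl
  rw [this, List.attach_map_subtype_val]

lemma sum_map_range (n : ℕ) (f : ℕ → ℚ) :
    ((List.range n).map f).sum = ∑ i ∈ range n, f i := by
  induction n with
  | zero => simp
  | succ n ih => rw [Finset.sum_range_succ, List.range_succ]; simp [ih]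

lemma sum_map_forests_succ (h : List PlaneTree → ℚ) (m : ℕ) :
    ((forests (m+1)).map h).sum
      = ∑ k ∈ range (m+1),
          ((forests k).map (fun us =>
            ((forests (m-k)).map (fun vs => h (node us :: vs))).sum)).sum := by
  rw [forests, List.map_flatMap]
  rw [sum_flatMap']
  have inner : ∀ k : {x // x ∈ List.range (m+1)},
      ((List.map h ((forests k.1).flatMap fun us => (forests (m-k.1)).map fun ts => node us :: ts))).sum
        = ((forests k.1).map (fun us => ((forests (m-k.1)).map (fun vs => h (node us :: vs))).sum)).sum := by
    intro k
    rw [List.map_flatMap, sum_flatMap']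
    congr 1
    apply List.map_congr_left
    intro us _
    rw [List.map_map]
    rfl
  calc ((List.range (m+1)).attach.map (fun k =>
          (List.map h ((forests k.1).flatMap fun us => (forests (m-k.1)).map fun ts => node us :: ts)).sum)).sum
      = ((List.range (m+1)).attach.map (fun k =>
          ((forests k.1).map (fun us => ((forests (m-k.1)).map (fun vs => h (node us :: vs))).sum)).sum)).sum := by
        congr 1
        apply List.map_congr_left
        intro k _
        exact inner k
    _ = ((List.range (m+1)).map (fun k =>
          ((forests k).map (fun us => ((forests (m-k)).map (fun vs => h (node us :: vs))).sum)).sum)).sum := by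
        exact sum_attach_map (List.range (m+1)) (fun k =>
          ((forests k).map (fun us => ((forests (m-k)).map (fun vs => h (node us :: vs))).sum)).sum)
    _ = _ := sum_map_range _ _

def C2 (x : ℚ) : ℚ := x * (x - 1) / 2

def AQ (m : ℕ) : ℚ := ((forests m).map (fun _ => (1:ℚ))).sum
def BQ (m : ℕ) : ℚ := ((forests m).map (fun ts => (numLeavesF ts : ℚ))).sum
def CQ (m : ℕ) : ℚ := ((forests m).map (fun ts => C2 (numLeavesF ts))).sum
def BtQ (k : ℕ) : ℚ := ((forests k).map (fun us => ((numLeaves (node us) : ℕ) : ℚ))).sum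
def CtQ (k : ℕ) : ℚ := ((forests k).map (fun us => C2 ((numLeaves (node us) : ℕ) : ℚ))).sum

lemma sum_map_add {α : Type*} (l : List α) (f g : α → ℚ) :
    (l.map (fun x => f x + g x)).sum = (l.map f).sum + (l.map g).sum := by
  induction l with
  | nil => simp
  | cons a l ih => simp [ih]; ring

lemma sum_map_const {α : Type*} (l : List α) (c : ℚ) :
    (l.map (fun _ => c)).sum = (l.map (fun _ => (1:ℚ))).sum * c := by
  induction l with
  | nil => simp
  | cons a l ih => simp [ih]; ring

lemma sum_map_mul_left {α : Type*} (l : List α) (c : ℚ) (f : α → ℚ) :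
    (l.map (fun x => c * f x)).sum = c * (l.map f).sum := by
  induction l with
  | nil => simp
  | cons a l ih => simp [ih]; ring

lemma sum_map_mul_right {α : Type*} (l : List α) (f : α → ℚ) (c : ℚ) :
    (l.map (fun x => f x * c)).sum = (l.map f).sum * c := by
  induction l with
  | nil => simp
  | cons a l ih => simp [ih]; ring

lemma forests_ne_nil (k : ℕ) (us : List PlaneTree) (hus : us ∈ forests (k+1)) : us ≠ [] := by
  intro h
  subst h
  have := forests_sound (k+1) [] hus
  simp [sizeList] at this

lemma numLeaves_node_eq (us : List PlaneTree) (hne : us ≠ []) :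
    numLeaves (node us) = numLeavesF us := by
  match us with
  | [] => exact absurd rfl hne
  | t :: ts => exact numLeaves_node t ts

lemma BtQ_eq (k : ℕ) : BtQ k = if k = 0 then 1 else BQ k := by
  match k with
  | 0 =>
    simp only [if_pos rfl, BtQ, forests]
    simp [numLeaves_node_nil]
  | k+1 =>
    rw [if_neg (Nat.succ_ne_zero k), BtQ, BQ]
    congr 1
    apply List.map_congr_left
    intro us hus
    rw [numLeaves_node_eq us (forests_ne_nil k us hus)]

lemma CtQ_eq (k : ℕ) : CtQ k = CQ k := by
  match k with
  | 0 =>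
    simp only [CtQ, CQ, forests]
    simp [numLeaves_node_nil, numLeavesF, C2]
  | k+1 =>
    rw [CtQ, CQ]
    congr 1
    apply List.map_congr_left
    intro us hus
    rw [numLeaves_node_eq us (forests_ne_nil k us hus)]

lemma AQ_rec (m : ℕ) : AQ (m+1) = ∑ k ∈ range (m+1), AQ k * AQ (m-k) := by
  rw [AQ, sum_map_forests_succ]
  apply Finset.sum_congr rfl
  intro k hk
  calc ((forests k).map (fun _ => ((forests (m-k)).map (fun _ => (1:ℚ))).sum)).sum
      = ((forests k).map (fun _ => (1:ℚ))).sum * ((forests (m-k)).map (fun _ => (1:ℚ))).sum := by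
        rw [sum_map_const]
    _ = AQ k * AQ (m-k) := rfl

lemma BQ_rec (m : ℕ) :
    BQ (m+1) = ∑ k ∈ range (m+1), (BtQ k * AQ (m-k) + AQ k * BQ (m-k)) := by
  rw [BQ, sum_map_forests_succ]
  apply Finset.sum_congr rfl
  intro k hk
  have inner : ∀ us : List PlaneTree,
      ((forests (m-k)).map (fun vs => ((numLeavesF (node us :: vs) : ℕ) : ℚ))).sum
        = ((numLeaves (node us) : ℕ) : ℚ) * AQ (m-k) + BQ (m-k) := by
    intro us
    have e : ∀ vs : List PlaneTree, ((numLeavesF (node us :: vs) : ℕ) : ℚ)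
        = ((numLeaves (node us) : ℕ) : ℚ) + ((numLeavesF vs : ℕ) : ℚ) := by
      intro vs
      rw [numLeavesF_cons]
      push_cast
      ring
    calc ((forests (m-k)).map (fun vs => ((numLeavesF (node us :: vs) : ℕ) : ℚ))).sum
        = ((forests (m-k)).map (fun vs => ((numLeaves (node us) : ℕ) : ℚ) + ((numLeavesF vs : ℕ) : ℚ))).sum := by
          congr 1; apply List.map_congr_left; intro vs _; exact e vs
      _ = ((forests (m-k)).map (fun _ => ((numLeaves (node us) : ℕ) : ℚ))).sum + BQ (m-k) := by
          rw [sum_map_add]; rfl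
      _ = ((numLeaves (node us) : ℕ) : ℚ) * AQ (m-k) + BQ (m-k) := by
          rw [sum_map_const]; rw [AQ]; ring
  calc ((forests k).map (fun us => ((forests (m-k)).map (fun vs => ((numLeavesF (node us :: vs) : ℕ) : ℚ))).sum)).sum
      = ((forests k).map (fun us => ((numLeaves (node us) : ℕ) : ℚ) * AQ (m-k) + BQ (m-k))).sum := by
        congr 1; apply List.map_congr_left; intro us _; exact inner us
    _ = BtQ k * AQ (m-k) + AQ k * BQ (m-k) := by
        rw [sum_map_add, sum_map_mul_right, sum_map_const]
        simp only [BtQ, AQ]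
        try ring

lemma CQ_rec (m : ℕ) :
    CQ (m+1) = ∑ k ∈ range (m+1),
      (CtQ k * AQ (m-k) + BtQ k * BQ (m-k) + AQ k * CQ (m-k)) := by
  rw [CQ, sum_map_forests_succ]
  apply Finset.sum_congr rfl
  intro k hk
  have inner : ∀ us : List PlaneTree,
      ((forests (m-k)).map (fun vs => C2 (numLeavesF (node us :: vs)))).sum
        = C2 ((numLeaves (node us) : ℕ) : ℚ) * AQ (m-k)
          + ((numLeaves (node us) : ℕ) : ℚ) * BQ (m-k) + CQ (m-k) := by
    intro us
    have e : ∀ vs : List PlaneTree, C2 ((numLeavesF (node us :: vs) : ℕ) : ℚ)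
        = C2 ((numLeaves (node us) : ℕ) : ℚ)
          + ((numLeaves (node us) : ℕ) : ℚ) * ((numLeavesF vs : ℕ) : ℚ)
          + C2 ((numLeavesF vs : ℕ) : ℚ) := by
      intro vs
      rw [numLeavesF_cons, C2, C2, C2]
      push_cast
      ring
    calc ((forests (m-k)).map (fun vs => C2 (numLeavesF (node us :: vs)))).sum
        = ((forests (m-k)).map (fun vs =>
            (C2 ((numLeaves (node us) : ℕ) : ℚ)
              + ((numLeaves (node us) : ℕ) : ℚ) * ((numLeavesF vs : ℕ) : ℚ))
            + C2 ((numLeavesF vs : ℕ) : ℚ))).sum := by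
          congr 1; apply List.map_congr_left; intro vs _
          rw [e vs]
      _ = _ := by
        rw [sum_map_add]
        have h2 : ((forests (m-k)).map (fun vs =>
            C2 ((numLeaves (node us) : ℕ) : ℚ)
              + ((numLeaves (node us) : ℕ) : ℚ) * ((numLeavesF vs : ℕ) : ℚ))).sum
            = C2 ((numLeaves (node us) : ℕ) : ℚ) * AQ (m-k)
              + ((numLeaves (node us) : ℕ) : ℚ) * BQ (m-k) := by
          rw [sum_map_add, sum_map_const]
          have h3 : ((forests (m-k)).map (fun vs =>
              ((numLeaves (node us) : ℕ) : ℚ) * ((numLeavesF vs : ℕ) : ℚ))).sum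
              = ((numLeaves (node us) : ℕ) : ℚ) * BQ (m-k) := by
            rw [sum_map_mul_left]
            rfl
          rw [h3, AQ]
          ring
        rw [h2]
        rfl
  calc ((forests k).map (fun us => ((forests (m-k)).map (fun vs => C2 (numLeavesF (node us :: vs)))).sum)).sum
      = ((forests k).map (fun us =>
          (C2 ((numLeaves (node us) : ℕ) : ℚ) * AQ (m-k)
            + ((numLeaves (node us) : ℕ) : ℚ) * BQ (m-k)) + CQ (m-k))).sum := by
        congr 1; apply List.map_congr_left; intro us _
        rw [inner us]; try ring
    _ = CtQ k * AQ (m-k) + BtQ k * BQ (m-k) + AQ k * CQ (m-k) := by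
        rw [sum_map_add, sum_map_add, sum_map_mul_right, sum_map_mul_right, sum_map_const]
        simp only [CtQ, BtQ, AQ]
        try ring

end PlaneTree
namespace PlaneTree
open Finset

lemma AQ_zero : AQ 0 = 1 := by simp [AQ, forests]
lemma BQ_zero : BQ 0 = 0 := by simp [BQ, forests, numLeavesF]
lemma CQ_zero : CQ 0 = 0 := by simp [CQ, forests, numLeavesF, C2]

lemma AQ_eq : ∀ m, AQ m = cQ m := by
  intro m
  induction m using Nat.strong_induction_on with
  | _ m ih =>
    match m with
    | 0 => rw [AQ_zero, cQ_zero]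
    | m+1 =>
      rw [AQ_rec]
      have t : ∀ k ∈ range (m+1), AQ k * AQ (m-k) = cQ k * cQ (m-k) := by
        intro k hk
        simp only [Finset.mem_range] at hk
        rw [ih k (by omega), ih (m-k) (by omega)]
      rw [Finset.sum_congr rfl t]
      have := L1 m
      rw [conv] at this
      exact this

lemma BQ_eq : ∀ m, BQ (m+1) = dQ (m+1) / 2 := by
  intro m
  induction m using Nat.strong_induction_on with
  | _ m ih =>
    rw [BQ_rec]
    have t : ∀ k ∈ range (m+1), BtQ k * AQ (m-k) + AQ k * BQ (m-k)
        = (if k = 0 then 1 else BQ k) * cQ (m-k) + cQ k * BQ (m-k) := by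
      intro k hk
      rw [BtQ_eq, AQ_eq, AQ_eq]
    rw [Finset.sum_congr rfl t, Finset.sum_add_distrib]
    have hconv : ∑ k ∈ range m, dQ (k+1) * cQ (m-(k+1)) = dQ (m+1)/2 - cQ m := by
      have h1 : conv dQ cQ m = dQ (m+1)/2 := by rw [conv_comm, L2]
      rw [conv, Finset.sum_range_succ'] at h1
      simp only [Nat.sub_zero, dQ_zero, one_mul] at h1
      linarith [h1]
    have hconv2 : ∑ k ∈ range m, cQ k * dQ (m-k) = dQ (m+1)/2 - cQ m := by
      have h1 := L2 m
      rw [conv, Finset.sum_range_succ] at h1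
      have h0 : m - m = 0 := by omega
      rw [h0, dQ_zero] at h1
      linarith [h1]
    have S1 : ∑ k ∈ range (m+1), (if k = 0 then 1 else BQ k) * cQ (m-k)
        = (dQ (m+1)/2 - cQ m)/2 + cQ m := by
      rw [Finset.sum_range_succ']
      simp only [if_pos rfl, Nat.sub_zero, one_mul]
      have t2 : ∀ k ∈ range m, (if k+1 = 0 then (1:ℚ) else BQ (k+1)) * cQ (m-(k+1))
          = (dQ (k+1) * cQ (m-(k+1)))/2 := by
        intro k hk
        simp only [Finset.mem_range] at hk
        rw [if_neg (Nat.succ_ne_zero k), ih k (by omega)]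
        ring
      rw [Finset.sum_congr rfl t2, ← Finset.sum_div, hconv]
      norm_num
    have S2 : ∑ k ∈ range (m+1), cQ k * BQ (m-k) = (dQ (m+1)/2 - cQ m)/2 := by
      rw [Finset.sum_range_succ]
      have h0 : m - m = 0 := by omega
      rw [h0, BQ_zero, mul_zero, add_zero]
      have t2 : ∀ k ∈ range m, cQ k * BQ (m-k) = (cQ k * dQ (m-k))/2 := by
        intro k hk
        simp only [Finset.mem_range] at hk
        have h1 : m - k = (m-k-1)+1 := by omega
        rw [h1, ih (m-k-1) (by omega)]
        ring
      rw [Finset.sum_congr rfl t2, ← Finset.sum_div, hconv2]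
    rw [S1, S2]
    ring

noncomputable def gamQ : ℕ → ℚ
  | 0 => 0
  | (j+1) => j * dQ j / 2

lemma CQ_eq : ∀ m, CQ m = gamQ m := by
  intro m
  induction m using Nat.strong_induction_on with
  | _ m ih =>
    match m with
    | 0 => rw [CQ_zero]; rfl
    | m+1 =>
      rw [CQ_rec]
      have t : ∀ k ∈ range (m+1),
          CtQ k * AQ (m-k) + BtQ k * BQ (m-k) + AQ k * CQ (m-k)
          = gamQ k * cQ (m-k)
            + (if k = 0 then 1 else BQ k) * BQ (m-k) + cQ k * gamQ (m-k) := by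
        intro k hk
        simp only [Finset.mem_range] at hk
        rw [CtQ_eq, ih k (by omega), ih (m-k) (by omega), BtQ_eq, AQ_eq, AQ_eq]
      rw [Finset.sum_congr rfl t, Finset.sum_add_distrib, Finset.sum_add_distrib]
      have T13 : ∑ k ∈ range (m+1), cQ k * gamQ (m-k)
          = ∑ k ∈ range (m+1), gamQ k * cQ (m-k) := by
        have h1 : conv cQ gamQ m = conv gamQ cQ m := conv_comm cQ gamQ m
        rw [conv, conv] at h1
        exact h1
      rw [T13]
      match m with
      | 0 =>
        simp [gamQ, BQ_zero, cQ_zero]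
      | p+1 =>
        have T1 : ∑ k ∈ range (p+2), gamQ k * cQ (p+1-k)
            = ((p+1) * dQ (p+1)/2 - 4^p)/2 := by
          rw [Finset.sum_range_succ']
          have hg0 : gamQ 0 = 0 := rfl
          rw [hg0, zero_mul, add_zero]
          have t2 : ∀ k ∈ range (p+1), gamQ (k+1) * cQ (p+1-(k+1))
              = ((k:ℚ) * dQ k * cQ (p-k))/2 := by
            intro k hk
            have hg : gamQ (k+1) = k * dQ k / 2 := rfl
            have hi : p + 1 - (k+1) = p - k := by omega
            rw [hg, hi]
            ring
          rw [Finset.sum_congr rfl t2, ← Finset.sum_div, Lu p]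
        have T2 : ∑ k ∈ range (p+2), (if k = 0 then 1 else BQ k) * BQ (p+1-k)
            = 4^p := by
          rw [Finset.sum_range_succ']
          simp only [if_pos rfl, Nat.sub_zero, one_mul]
          have hB : BQ (p+1) = dQ (p+1)/2 := BQ_eq p
          have t2 : ∀ k ∈ range (p+1), (if k+1 = 0 then (1:ℚ) else BQ (k+1)) * BQ (p+1-(k+1))
              = (dQ (k+1)/2) * BQ (p-k) := by
            intro k hk
            rw [if_neg (Nat.succ_ne_zero k), BQ_eq k]
            have hi : p + 1 - (k+1) = p - k := by omega
            rw [hi]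
          rw [Finset.sum_congr rfl t2, Finset.sum_range_succ]
          have h0 : p - p = 0 := by omega
          rw [h0, BQ_zero, mul_zero, add_zero]
          have t3 : ∀ k ∈ range p, (dQ (k+1)/2) * BQ (p-k) = (dQ (k+1) * dQ (p-k))/4 := by
            intro k hk
            simp only [Finset.mem_range] at hk
            have h1 : p - k = (p-k-1)+1 := by omega
            rw [h1, BQ_eq (p-k-1)]
            ring
          rw [Finset.sum_congr rfl t3, ← Finset.sum_div]
          have he : ∑ k ∈ range p, dQ (k+1) * dQ (p-k) = 4^(p+1) - 2 * dQ (p+1) := by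
            have h1 := L3 (p+1)
            rw [conv, Finset.sum_range_succ'] at h1
            simp only [Nat.sub_zero, dQ_zero, one_mul] at h1
            rw [Finset.sum_range_succ] at h1
            have h2 : p + 1 - (p+1) = 0 := by omega
            rw [h2, dQ_zero, mul_one] at h1
            have t4 : ∀ k ∈ range p, dQ (k+1) * dQ (p+1-(k+1)) = dQ (k+1) * dQ (p-k) := by
              intro k hk
              have : p + 1 - (k+1) = p - k := by omega
              rw [this]
            rw [Finset.sum_congr rfl t4] at h1
            linarith [h1]
          rw [he, hB]
          norm_num
          try ring
        rw [T1, T2]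
        have hg : gamQ (p+1+1) = ((p+1 : ℕ) : ℚ) * dQ (p+1) / 2 := rfl
        rw [hg]
        push_cast
        ring

end PlaneTree
namespace PlaneTree
open Finset

lemma choose_two_cast (x : ℕ) : ((x.choose 2 : ℕ) : ℚ) = C2 x := by
  induction x with
  | zero => simp [C2]
  | succ x ih =>
    rw [Nat.choose_succ_succ]
    push_cast
    rw [ih, C2, C2, Nat.choose_one_right]
    push_cast
    ring

lemma size_eq_iff (p : ℕ) (T : PlaneTree) :
    T.size = p + 1 ↔ T ∈ (forests p).map node := by
  constructor
  · intro h
    match T with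
    | node ts =>
      have hs : sizeList ts = p := by
        have : size (node ts) = 1 + sizeList ts := rfl
        omega
      rw [List.mem_map]
      exact ⟨ts, by rw [← hs]; exact forests_complete ts, rfl⟩
  · intro h
    rw [List.mem_map] at h
    obtain ⟨ts, hts, rfl⟩ := h
    have := forests_sound p ts hts
    rw [size_node, this]
    omega

lemma fact_pos_Q (k : ℕ) : ((Nat.factorial k : ℕ) : ℚ) > 0 := by
  exact_mod_cast Nat.factorial_pos k

end PlaneTree

theorem total_leaf_to_leaf_paths_plane_trees (n : ℕ) (hn : 3 ≤ n) :
    (∑ᶠ T : {T : PlaneTree // T.size = n}, (((T.1.leafPositions).sublistsLen 2).length : ℚ))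
      = (Nat.factorial (2 * n - 5) : ℚ) / ((Nat.factorial (n - 3) : ℚ)) ^ 2 := by
  classical
  open PlaneTree in
  obtain ⟨p, rfl⟩ : ∃ p, n = p + 3 := ⟨n - 3, by omega⟩
  set f : PlaneTree → ℚ := fun T => (((T.leafPositions).sublistsLen 2).length : ℚ) with hf
  set l : List PlaneTree := (forests (p+2)).map node with hl
  have hnodup : l.Nodup := (forests_nodup (p+2)).map node_injective
  have hmem : ∀ T : PlaneTree, T.size = p + 3 ↔ T ∈ l := by
    intro T
    have := size_eq_iff (p+2) T
    rw [hl]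
    constructor
    · intro h; exact this.mp (by omega)
    · intro h; have := this.mpr h; omega
  have hset : {T : PlaneTree | T.size = p + 3} = ↑l.toFinset := by
    ext T
    simp only [Set.mem_setOf_eq, Finset.coe_sort_coe, List.coe_toFinset, Set.mem_setOf_eq]
    rw [hmem T]
  have step1 : (∑ᶠ T : {T : PlaneTree // T.size = p + 3}, f T.1)
      = ∑ᶠ T ∈ {T : PlaneTree | T.size = p + 3}, f T := by
    exact finsum_set_coe_eq_finsum_mem {T : PlaneTree | T.size = p + 3}
  have step2 : (∑ᶠ T ∈ {T : PlaneTree | T.size = p + 3}, f T) = ∑ T ∈ l.toFinset, f T := by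
    rw [hset]
    exact finsum_mem_coe_finset f l.toFinset
  have step3 : ∑ T ∈ l.toFinset, f T = (l.map f).sum := List.sum_toFinset f hnodup
  have step4 : (l.map f).sum = CtQ (p+2) := by
    rw [hl, List.map_map, CtQ]
    congr 1
    apply List.map_congr_left
    intro ts _
    show f (node ts) = C2 ((numLeaves (node ts) : ℕ) : ℚ)
    rw [hf]
    simp only [List.length_sublistsLen]
    rw [choose_two_cast]
    rfl
  have hval : CtQ (p+2) = ((p+1 : ℕ) : ℚ) * dQ (p+1) / 2 := by
    rw [CtQ_eq, CQ_eq]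
    rfl
  have key : (∑ᶠ T : {T : PlaneTree // T.size = p + 3}, f T.1)
      = ((p+1 : ℕ) : ℚ) * dQ (p+1) / 2 := by
    rw [step1, step2, step3, step4, hval]
  rw [key]
  -- arithmetic
  have h1 : 2 * (p + 3) - 5 = 2*p+1 := by omega
  have h2 : p + 3 - 3 = p := by omega
  rw [h1, h2]
  have hcb : Nat.centralBinom (p+1) = Nat.choose (2*p+2) (p+1) := by
    unfold Nat.centralBinom
    congr 1
    try omega
  have hchoose := Nat.choose_mul_factorial_mul_factorial (show p+1 ≤ 2*p+2 by omega)
  have hsub : 2*p+2 - (p+1) = p+1 := by omega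
  rw [hsub] at hchoose
  have hQ : ((Nat.choose (2*p+2) (p+1) : ℕ) : ℚ)
      * ((Nat.factorial (p+1) : ℕ) : ℚ) * ((Nat.factorial (p+1) : ℕ) : ℚ)
      = ((Nat.factorial (2*p+2) : ℕ) : ℚ) := by
    exact_mod_cast congrArg (Nat.cast : ℕ → ℚ) hchoose
  have hfs : ((Nat.factorial (p+1) : ℕ) : ℚ) = ((p:ℚ)+1) * ((Nat.factorial p : ℕ) : ℚ) := by
    rw [Nat.factorial_succ]; push_cast; ring
  have hfs2 : ((Nat.factorial (2*p+2) : ℕ) : ℚ) = ((2*p:ℚ)+2) * ((Nat.factorial (2*p+1) : ℕ) : ℚ) := by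
    have : 2*p+2 = (2*p+1)+1 := by omega
    rw [this, Nat.factorial_succ]; push_cast; ring
  rw [hfs, hfs2] at hQ
  have hd : dQ (p+1) = ((Nat.choose (2*p+2) (p+1) : ℕ) : ℚ) := by
    rw [dQ, hcb]
  rw [hd]
  have hp1 : ((p:ℚ)+1) ≠ 0 := by positivity
  have hfp : ((Nat.factorial p : ℕ) : ℚ) ≠ 0 := ne_of_gt (fact_pos_Q p)
  push_cast at hQ ⊢
  field_simp
  try nlinarith [hQ, sq_nonneg (((Nat.factorial p : ℕ) : ℚ))]
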